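/- arXiv:1507.03055 — 5 statements merged into one kernel-verified Lean document; each statement's English description precedes it below -/
import Mathlib

section
/- For every nonnegative integer n, Σ_{k=0}^n C(n,k)(-1)^{n+1} (E_k(1/2) - (1/2)^k) = (-1)^n (E_n(1/2) + (3^n - 2)/2^n). -/
open Finset

/-- Bernoulli polynomials evaluated at a real number. -/
noncomputable def bernoulliPoly (n : ℕ) (x : ℝ) : ℝ :=
  ((Polynomial.bernoulli n).map (algebraMap ℚ ℝ)).eval x

/-- Euler polynomials `E_n(x)` defined via `2 e^{xt}/(e^t+1) = ∑ E_n(x) t^n/n!`. -/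
noncomputable def eulerPoly (n : ℕ) (x : ℝ) : ℝ :=
  (n.factorial : ℝ) * PowerSeries.coeff n
    (2 * PowerSeries.mk (fun k => x ^ k / (k.factorial : ℝ)) * (PowerSeries.exp ℝ + 1)⁻¹)

open PowerSeries in
lemma mk_eq_rescale (x : ℝ) :
    PowerSeries.mk (fun k => x ^ k / (k.factorial : ℝ)) = rescale x (exp ℝ) := by
  ext n
  simp [coeff_rescale, coeff_exp, div_eq_mul_inv]

open PowerSeries in
lemma gunit : constantCoeff (exp ℝ + 1 : ℝ⟦X⟧) ≠ 0 := by
  simp [constantCoeff_exp]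

open PowerSeries in
lemma euler_shift (n : ℕ) (x : ℝ) :
    eulerPoly n (x + 1) = ∑ k ∈ range (n + 1), (n.choose k : ℝ) * eulerPoly k x := by
  have h1 : PowerSeries.mk (fun k => (x+1) ^ k / (k.factorial : ℝ))
      = PowerSeries.mk (fun k => x ^ k / (k.factorial : ℝ)) * exp ℝ := by
    rw [mk_eq_rescale, mk_eq_rescale, ← exp_mul_exp_eq_exp_add x 1, rescale_one]
    rfl
  unfold eulerPoly
  rw [h1]
  have h2 : 2 * (PowerSeries.mk (fun k => x ^ k / (k.factorial : ℝ)) * exp ℝ) * (exp ℝ + 1)⁻¹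
      = (2 * PowerSeries.mk (fun k => x ^ k / (k.factorial : ℝ)) * (exp ℝ + 1)⁻¹) * exp ℝ := by
    ring
  rw [h2, coeff_mul, Finset.Nat.sum_antidiagonal_eq_sum_range_succ_mk, Finset.mul_sum]
  refine Finset.sum_congr rfl fun k hk => ?_
  have hkn : k ≤ n := Nat.lt_succ_iff.mp (Finset.mem_range.mp hk)
  rw [coeff_exp]
  rw [Nat.cast_choose ℝ hkn]
  have h3 : (algebraMap ℚ ℝ) (1 / (n - k).factorial : ℚ) = 1 / ((n-k).factorial : ℝ) := by
    push_cast; simp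
  rw [h3]
  have f1 : ((k.factorial : ℝ)) ≠ 0 := Nat.cast_ne_zero.mpr k.factorial_ne_zero
  have f2 : (((n-k).factorial : ℝ)) ≠ 0 := Nat.cast_ne_zero.mpr (n-k).factorial_ne_zero
  field_simp

open PowerSeries in
lemma euler_add (n : ℕ) (x : ℝ) :
    eulerPoly n (x + 1) + eulerPoly n x = 2 * x ^ n := by
  have key : 2 * PowerSeries.mk (fun k => (x+1) ^ k / (k.factorial : ℝ)) * (exp ℝ + 1)⁻¹
      + 2 * PowerSeries.mk (fun k => x ^ k / (k.factorial : ℝ)) * (exp ℝ + 1)⁻¹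
      = 2 * PowerSeries.mk (fun k => x ^ k / (k.factorial : ℝ)) := by
    rw [mk_eq_rescale, mk_eq_rescale, ← exp_mul_exp_eq_exp_add x 1, rescale_one]
    have hinv : (exp ℝ + 1) * (exp ℝ + 1)⁻¹ = 1 := PowerSeries.mul_inv_cancel _ gunit
    have : 2 * (rescale x (exp ℝ) * RingHom.id ℝ⟦X⟧ (exp ℝ)) * (exp ℝ + 1)⁻¹
        + 2 * rescale x (exp ℝ) * (exp ℝ + 1)⁻¹
        = 2 * rescale x (exp ℝ) * ((exp ℝ + 1) * (exp ℝ + 1)⁻¹) := by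
      simp only [RingHom.id_apply]; ring
    rw [this, hinv, mul_one]
  unfold eulerPoly
  rw [← mul_add, ← map_add, key]
  rw [show ((2 : ℝ⟦X⟧)) = PowerSeries.C (2 : ℝ) from (map_ofNat (C (R := ℝ)) 2).symm]
  rw [coeff_C_mul, coeff_mk]
  have f1 : ((n.factorial : ℝ)) ≠ 0 := Nat.cast_ne_zero.mpr n.factorial_ne_zero
  field_simp

theorem stmt9 (n : ℕ) :
    ∑ k ∈ Finset.range (n + 1),
        (n.choose k : ℝ) * (-1) ^ (n + 1) * (eulerPoly k (1 / 2) - (1 / 2) ^ k) =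
      (-1) ^ n * (eulerPoly n (1 / 2) + (3 ^ n - 2) / 2 ^ n) := by
  have hA := euler_shift n (1/2)
  have hB := euler_add n (1/2)
  have hE : ∑ k ∈ Finset.range (n+1), (n.choose k : ℝ) * eulerPoly k (1/2)
      = 2 * (1/2 : ℝ)^n - eulerPoly n (1/2) := by rw [← hA]; linarith
  have hC : (∑ k ∈ Finset.range (n+1), (n.choose k : ℝ) * (1/2)^k) = 3^n / 2^n := by
    have h := add_pow (1/2 : ℝ) 1 n
    simp only [one_pow, mul_one] at h
    have h2 : ((1:ℝ)/2 + 1)^n = 3^n / 2^n := by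
      rw [show (1:ℝ)/2 + 1 = 3/2 by norm_num, div_pow]
    rw [h2] at h
    rw [h]
    exact Finset.sum_congr rfl fun k _ => by ring
  have key : ∀ k ∈ Finset.range (n+1),
      (n.choose k : ℝ) * (-1)^(n+1) * (eulerPoly k (1/2) - (1/2)^k)
      = (-1)^(n+1) * ((n.choose k : ℝ) * eulerPoly k (1/2))
        - (-1)^(n+1) * ((n.choose k : ℝ) * (1/2)^k) := fun k _ => by ring
  rw [Finset.sum_congr rfl key, Finset.sum_sub_distrib, ← Finset.mul_sum, ← Finset.mul_sum,
    hE, hC, pow_succ]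
  have h2 : (2:ℝ)^n ≠ 0 := by positivity
  have h3 : (1/2:ℝ)^n * 2^n = 1 := by rw [← mul_pow]; norm_num
  field_simp
  linear_combination (-2:ℝ) * h3
end

section
/- Let a: ℕ → ℝ be a sequence with exponential generating function a*(x) = Σ_{n≥0} a_n x^n/n! (as a formal power series). Then a_n = Σ_{k=0}^n C(n,k)(-1)^n a_k for all n if and only if a*(x)e^{x/2} is an even formal power series. -/
open Finset

open PowerSeries in

lemma arith_iff (a : ℕ → ℝ) (n : ℕ) :
    (a n = ∑ k ∈ Finset.range (n + 1), (n.choose k : ℝ) * (-1) ^ n * a k) ↔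
    ((-1 : ℝ) ^ n * (a n / (n.factorial : ℝ)) =
      ∑ k ∈ Finset.range (n + 1), (a k / (k.factorial : ℝ)) * (1 / ((n - k).factorial : ℝ))) := by
  have hn : (n.factorial : ℝ) ≠ 0 := Nat.cast_ne_zero.mpr n.factorial_ne_zero
  have hsq : ((-1 : ℝ) ^ n) * ((-1 : ℝ) ^ n) = 1 := by
    rw [← pow_add]; exact Even.neg_one_pow ⟨n, rfl⟩
  have hs : ∑ k ∈ Finset.range (n + 1), (a k / (k.factorial : ℝ)) * (1 / ((n - k).factorial : ℝ))
      = (∑ k ∈ Finset.range (n + 1), (n.choose k : ℝ) * a k) / (n.factorial : ℝ) := by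
    rw [Finset.sum_div]
    refine Finset.sum_congr rfl fun k hk => ?_
    have hk' : k ≤ n := Nat.lt_succ_iff.mp (Finset.mem_range.mp hk)
    have h' : (n.choose k : ℝ) * (k.factorial : ℝ) * ((n - k).factorial : ℝ) = (n.factorial : ℝ) := by
      exact_mod_cast congrArg (Nat.cast : ℕ → ℝ) (Nat.choose_mul_factorial_mul_factorial hk')
    have hkf : (k.factorial : ℝ) ≠ 0 := Nat.cast_ne_zero.mpr k.factorial_ne_zero
    have hnkf : ((n - k).factorial : ℝ) ≠ 0 := Nat.cast_ne_zero.mpr (n - k).factorial_ne_zero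
    rw [div_mul_div_comm, mul_one, div_eq_div_iff (by positivity) hn]
    linear_combination (-(a k)) * h'
  have h1 : (∑ k ∈ Finset.range (n + 1), (n.choose k : ℝ) * (-1) ^ n * a k)
      = (-1 : ℝ) ^ n * ∑ k ∈ Finset.range (n + 1), (n.choose k : ℝ) * a k := by
    rw [Finset.mul_sum]; exact Finset.sum_congr rfl fun k _ => by ring
  rw [hs, h1]
  set S := ∑ k ∈ Finset.range (n + 1), (n.choose k : ℝ) * a k with hS
  constructor
  · intro h
    rw [h, mul_div_assoc, ← mul_assoc, hsq, one_mul]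
  · intro h
    have h' : (-1 : ℝ) ^ n * a n = S := by
      field_simp at h
      linarith [h]
    calc a n = ((-1 : ℝ) ^ n * (-1 : ℝ) ^ n) * a n := by rw [hsq, one_mul]
    _ = (-1 : ℝ) ^ n * S := by rw [mul_assoc, h']

lemma ps_part (a : ℕ → ℝ) :
    (PowerSeries.rescale (-1 : ℝ)
          (PowerSeries.mk (fun n => a n / (n.factorial : ℝ)) *
            PowerSeries.rescale (1 / 2 : ℝ) (PowerSeries.exp ℝ)) =
        PowerSeries.mk (fun n => a n / (n.factorial : ℝ)) *
          PowerSeries.rescale (1 / 2 : ℝ) (PowerSeries.exp ℝ)) ↔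
    PowerSeries.rescale (-1 : ℝ) (PowerSeries.mk (fun n => a n / (n.factorial : ℝ)))
      = PowerSeries.mk (fun n => a n / (n.factorial : ℝ)) * PowerSeries.exp ℝ := by
  set A := PowerSeries.mk (fun n => a n / (n.factorial : ℝ)) with hA
  set u := PowerSeries.rescale (1 / 2 : ℝ) (PowerSeries.exp ℝ) with hu
  set v := PowerSeries.rescale (-(1 / 2) : ℝ) (PowerSeries.exp ℝ) with hv
  have hru : PowerSeries.rescale (-1 : ℝ) u = v := by
    rw [hu, hv, PowerSeries.rescale_rescale]; norm_num
  have huv : u * v = 1 := by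
    have h0 := congrArg (PowerSeries.rescale (1 / 2 : ℝ))
      (PowerSeries.exp_mul_exp_neg_eq_one (A := ℝ))
    rw [map_mul, map_one] at h0
    rw [hu, hv]
    convert h0 using 2
    show PowerSeries.rescale (-(1/2) : ℝ) _ = PowerSeries.rescale (1/2 : ℝ)
      (PowerSeries.rescale (-1 : ℝ) (PowerSeries.exp ℝ))
    rw [PowerSeries.rescale_rescale]; norm_num
  have huu : u * u = PowerSeries.exp ℝ := by
    rw [hu, ← map_mul, ← sq, PowerSeries.exp_pow_eq_rescale_exp,
      PowerSeries.rescale_rescale]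
    norm_num [PowerSeries.rescale_one]
  rw [map_mul, hru]
  constructor
  · intro h
    have := congrArg (· * u) h
    simp only [mul_assoc] at this
    rw [mul_comm v u, huv, mul_one, mul_comm u u, huu] at this
    exact this
  · intro h
    rw [h, mul_assoc, ← huu, mul_assoc, huv, mul_one]

theorem stmt13 (a : ℕ → ℝ) :
    (∀ n, a n = ∑ k ∈ Finset.range (n + 1), (n.choose k : ℝ) * (-1) ^ n * a k) ↔
      PowerSeries.rescale (-1 : ℝ)
          (PowerSeries.mk (fun n => a n / (n.factorial : ℝ)) *
            PowerSeries.rescale (1 / 2 : ℝ) (PowerSeries.exp ℝ)) =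
        PowerSeries.mk (fun n => a n / (n.factorial : ℝ)) *
          PowerSeries.rescale (1 / 2 : ℝ) (PowerSeries.exp ℝ) := by
  rw [ps_part, PowerSeries.ext_iff]
  refine forall_congr' fun n => ?_
  rw [arith_iff]
  have hL : PowerSeries.coeff n
      (PowerSeries.rescale (-1 : ℝ) (PowerSeries.mk fun m => a m / (m.factorial : ℝ)))
      = (-1 : ℝ) ^ n * (a n / (n.factorial : ℝ)) := by
    rw [PowerSeries.coeff_rescale, PowerSeries.coeff_mk]
  have hR : PowerSeries.coeff n
      ((PowerSeries.mk fun m => a m / (m.factorial : ℝ)) * PowerSeries.exp ℝ)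
      = ∑ k ∈ Finset.range (n + 1),
          (a k / (k.factorial : ℝ)) * (1 / ((n - k).factorial : ℝ)) := by
    rw [PowerSeries.coeff_mul, Finset.Nat.sum_antidiagonal_eq_sum_range_succ_mk]
    refine Finset.sum_congr rfl fun k hk => ?_
    rw [PowerSeries.coeff_mk, PowerSeries.coeff_exp]
    norm_num
  rw [hL, hR]
end

section
/- Suppose a: ℕ → ℝ satisfies a_n = Σ_{k=0}^n C(n,k)(-1)^n a_k for all n (self-dual with respect to D₃). Then for any function f: ℕ → ℝ and all n ≥ 0, Σ_{k=0}^n C(n,k) (f(k) - Σ_{j=0}^k (-1)^{n-j} C(k,j) f(j)) a_{n-k} = 0. -/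
open Finset

lemma aux_key (a : ℕ → ℝ)
    (ha : ∀ n, a n = ∑ k ∈ Finset.range (n + 1), (n.choose k : ℝ) * (-1) ^ n * a k)
    (m : ℕ) : ∑ i ∈ Finset.range (m + 1), (m.choose i : ℝ) * a i = (-1) ^ m * a m := by
  have h2 : a m = (-1 : ℝ) ^ m * ∑ i ∈ Finset.range (m + 1), (m.choose i : ℝ) * a i := by
    rw [ha m, Finset.mul_sum]
    exact Finset.sum_congr rfl fun i _ => by ring
  have hsq : ((-1 : ℝ) ^ m) * ((-1 : ℝ) ^ m) = 1 := by
    rw [← pow_add]; exact Even.neg_one_pow ⟨m, rfl⟩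
  conv_rhs => rw [h2]
  rw [← mul_assoc, hsq, one_mul]

lemma aux_key2 (a : ℕ → ℝ)
    (ha : ∀ n, a n = ∑ k ∈ Finset.range (n + 1), (n.choose k : ℝ) * (-1) ^ n * a k)
    (M : ℕ) : ∑ m ∈ Finset.range (M + 1), (M.choose m : ℝ) * a (M - m) = (-1) ^ M * a M := by
  rw [← aux_key a ha M, ← Finset.sum_range_reflect (fun i => (M.choose i : ℝ) * a i) (M + 1)]
  apply Finset.sum_congr rfl
  intro m hm
  rw [Finset.mem_range, Nat.lt_succ_iff] at hm
  simp only [Nat.add_sub_cancel]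
  rw [Nat.choose_symm hm]

theorem stmt15 (a : ℕ → ℝ)
    (ha : ∀ n, a n = ∑ k ∈ Finset.range (n + 1), (n.choose k : ℝ) * (-1) ^ n * a k)
    (f : ℕ → ℝ) (n : ℕ) :
    ∑ k ∈ Finset.range (n + 1), (n.choose k : ℝ) *
        (f k - ∑ j ∈ Finset.range (k + 1), (-1) ^ (n - j) * (k.choose j : ℝ) * f j) *
        a (n - k) = 0 := by
  have expand : ∀ k ∈ Finset.range (n + 1),
      (n.choose k : ℝ) *
        (f k - ∑ j ∈ Finset.range (k + 1), (-1) ^ (n - j) * (k.choose j : ℝ) * f j) * a (n - k)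
      = (n.choose k : ℝ) * f k * a (n - k) -
        ∑ j ∈ Finset.range (k + 1),
          (-1) ^ (n - j) * ((n.choose j : ℝ) * ((n - j).choose (k - j) : ℝ)) * f j * a (n - k) := by
    intro k hk
    rw [Finset.mem_range, Nat.lt_succ_iff] at hk
    rw [mul_sub, sub_mul, Finset.mul_sum, Finset.sum_mul]
    congr 1
    apply Finset.sum_congr rfl
    intro j hj
    rw [Finset.mem_range, Nat.lt_succ_iff] at hj
    have hc : (n.choose k : ℝ) * (k.choose j : ℝ) = (n.choose j : ℝ) * ((n - j).choose (k - j) : ℝ) := by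
      rw [← Nat.cast_mul, ← Nat.cast_mul, Nat.choose_mul hj]
    calc (n.choose k : ℝ) * ((-1) ^ (n - j) * (k.choose j : ℝ) * f j) * a (n - k)
        = (-1) ^ (n - j) * ((n.choose k : ℝ) * (k.choose j : ℝ)) * f j * a (n - k) := by ring
      _ = _ := by rw [hc]
  rw [Finset.sum_congr rfl expand, Finset.sum_sub_distrib, sub_eq_zero]
  -- swap order of summation
  have swap : ∑ k ∈ Finset.range (n + 1), ∑ j ∈ Finset.range (k + 1),
        (-1 : ℝ) ^ (n - j) * ((n.choose j : ℝ) * ((n - j).choose (k - j) : ℝ)) * f j * a (n - k)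
      = ∑ j ∈ Finset.range (n + 1), ∑ k ∈ Finset.Ico j (n + 1),
        (-1 : ℝ) ^ (n - j) * ((n.choose j : ℝ) * ((n - j).choose (k - j) : ℝ)) * f j * a (n - k) := by
    simp_rw [Finset.range_eq_Ico]
    exact (Finset.sum_Ico_Ico_comm 0 (n + 1) fun i j =>
      (-1 : ℝ) ^ (n - i) * ((n.choose i : ℝ) * ((n - i).choose (j - i) : ℝ)) * f i * a (n - j)).symm
  rw [swap]
  apply Finset.sum_congr rfl
  intro j hj
  rw [Finset.mem_range, Nat.lt_succ_iff] at hj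
  have hsq : ((-1 : ℝ) ^ (n - j)) * ((-1 : ℝ) ^ (n - j)) = 1 := by
    rw [← pow_add]; exact Even.neg_one_pow ⟨n - j, rfl⟩
  rw [Finset.sum_Ico_eq_sum_range]
  have hrange : n + 1 - j = (n - j) + 1 := by omega
  rw [hrange]
  have hterm : ∀ m ∈ Finset.range ((n - j) + 1),
      (-1 : ℝ) ^ (n - j) * ((n.choose j : ℝ) * ((n - j).choose (j + m - j) : ℝ)) * f j * a (n - (j + m))
      = ((-1 : ℝ) ^ (n - j) * (n.choose j : ℝ) * f j) * (((n - j).choose m : ℝ) * a ((n - j) - m)) := by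
    intro m hm
    rw [Finset.mem_range, Nat.lt_succ_iff] at hm
    have h1 : j + m - j = m := by omega
    have h2 : n - (j + m) = (n - j) - m := by omega
    rw [h1, h2]; ring
  rw [Finset.sum_congr rfl hterm, ← Finset.mul_sum, aux_key2 a ha (n - j)]
  linear_combination (-((n.choose j : ℝ) * f j * a (n - j))) * hsq
end

section
/- Let k, ℓ be nonnegative integers and x, y, z real numbers with x + y + z = 1. Then (-1)^{ℓ+1} Σ_{j=0}^k x^{k-j} C(k,j) B_{ℓ+j+1}(y)/(ℓ+j+1) + (-1)^{k+1} Σ_{j=0}^ℓ x^{ℓ-j} C(ℓ,j) B_{k+j+1}(z)/(k+j+1) = x^{k+ℓ+1} / ((k+ℓ+1) C(k+ℓ, k)). -/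
open Finset
open scoped Polynomial

lemma bernoulli_comp_one_add (n : ℕ) :
    (Polynomial.bernoulli n).comp (1 + Polynomial.X) =
      Polynomial.bernoulli n + (n : ℚ[X]) * Polynomial.X ^ (n - 1) := by
  apply Polynomial.funext
  intro r
  simp [Polynomial.eval_comp, Polynomial.bernoulli_eval_one_add]

lemma bp_one_add (n : ℕ) (a : ℝ) :
    bernoulliPoly n (1 + a) = bernoulliPoly n a + n * a ^ (n - 1) := by
  have h := congrArg (fun p : ℚ[X] => ((p.map (algebraMap ℚ ℝ)).eval a)) (bernoulli_comp_one_add n)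
  simpa [bernoulliPoly, Polynomial.map_comp, Polynomial.eval_comp] using h

lemma bp_hasDerivAt (n : ℕ) (t : ℝ) :
    HasDerivAt (fun u => bernoulliPoly (n + 1) u) ((n + 1) * bernoulliPoly n t) t := by
  have h := ((Polynomial.bernoulli (n+1)).map (algebraMap ℚ ℝ)).hasDerivAt t
  refine h.congr_deriv ?_
  rw [Polynomial.derivative_map, Polynomial.derivative_bernoulli_add_one]
  simp [bernoulliPoly]

lemma bp_continuous (n : ℕ) : Continuous (bernoulliPoly n) := by
  unfold bernoulliPoly
  exact Polynomial.continuous _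

lemma integral_bp (n : ℕ) (hn : 1 ≤ n) : ∫ t in (0:ℝ)..1, bernoulliPoly n t = 0 := by
  have hne : ((n : ℝ) + 1) ≠ 0 := by positivity
  have hderiv : ∀ t ∈ Set.uIcc (0:ℝ) 1,
      HasDerivAt (fun u => bernoulliPoly (n + 1) u / (n + 1)) (bernoulliPoly n t) t := by
    intro t _
    have := (bp_hasDerivAt n t).div_const ((n : ℝ) + 1)
    simpa [mul_div_assoc, mul_div_cancel_left₀ _ hne] using this
  rw [intervalIntegral.integral_eq_sub_of_hasDerivAt hderiv
    ((bp_continuous n).intervalIntegrable 0 1)]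
  have h1 : bernoulliPoly (n + 1) 1 = bernoulliPoly (n + 1) 0 := by
    have := bp_one_add (n + 1) 0
    rw [zero_pow (by omega : n + 1 - 1 ≠ 0)] at this
    simpa using this
  rw [h1, sub_self]

lemma integral_bp_shift (M : ℕ) (c : ℝ) :
    ∫ t in (0:ℝ)..1, bernoulliPoly M (c - t) = (c - 1) ^ M := by
  have hne : ((M : ℝ) + 1) ≠ 0 := by positivity
  have hderiv : ∀ t ∈ Set.uIcc (0:ℝ) 1,
      HasDerivAt (fun u => -(bernoulliPoly (M + 1) (c - u)) / (M + 1))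
        (bernoulliPoly M (c - t)) t := by
    intro t _
    have h1 : HasDerivAt (fun u : ℝ => c - u) (-1) t := by
      simpa using (hasDerivAt_id t).const_sub c
    have h2 := ((bp_hasDerivAt M (c - t)).comp t h1).neg.div_const ((M : ℝ) + 1)
    refine h2.congr_deriv ?_
    field_simp
  rw [intervalIntegral.integral_eq_sub_of_hasDerivAt hderiv
    (((bp_continuous M).comp (by continuity)).intervalIntegrable 0 1)]
  have h1 : bernoulliPoly (M + 1) c = bernoulliPoly (M + 1) (c - 1) + (M + 1) * (c - 1) ^ M := by
    have := bp_one_add (M + 1) (c - 1)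
    simpa using this
  rw [sub_zero, h1]
  field_simp
  ring

lemma periodic_poly_const (P : Polynomial ℝ) (h : ∀ y : ℝ, P.eval (y + 1) = P.eval y) (y : ℝ) :
    P.eval y = P.eval 0 := by
  have hn : ∀ n : ℕ, P.eval (n : ℝ) = P.eval 0 := by
    intro n
    induction n with
    | zero => simp
    | succ n ih => push_cast; rw [h]; exact ih
  have hz : P - Polynomial.C (P.eval 0) = 0 := by
    apply Polynomial.eq_zero_of_infinite_isRoot
    apply Set.infinite_of_injective_forall_mem (f := fun n : ℕ => (n : ℝ)) Nat.cast_injective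
    intro n
    simp [Polynomial.IsRoot, hn n]
  have := congrArg (Polynomial.eval y) hz
  simpa [sub_eq_zero] using this

lemma beta_sum (l : ℕ) : ∀ k : ℕ,
    ∑ j ∈ range (l + 1), (-1 : ℝ) ^ j * (l.choose j) / ((k + j + 1 : ℕ) : ℝ)
    = 1 / (((k + l + 1) * (k + l).choose k : ℕ) : ℝ) := by
  induction l with
  | zero => intro k; simp
  | succ l ih =>
    intro k
    rw [Finset.sum_range_succ' _ (l + 1)]
    have e1 : ∀ j ∈ range (l + 1),
        (-1 : ℝ) ^ (j + 1) * (((l+1).choose (j+1) : ℕ) : ℝ) / ((k + (j+1) + 1 : ℕ) : ℝ)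
        = -((-1 : ℝ) ^ j * (l.choose j) / (((k+1) + j + 1 : ℕ) : ℝ))
          + (-1 : ℝ) ^ (j+1) * (l.choose (j+1)) / ((k + (j+1) + 1 : ℕ) : ℝ) := by
      intro j _
      rw [Nat.choose_succ_succ, show (k + 1) + j + 1 = k + (j + 1) + 1 from by omega]
      push_cast
      ring
    rw [Finset.sum_congr rfl e1, Finset.sum_add_distrib, Finset.sum_neg_distrib]
    rw [ih (k + 1)]
    have e2 : (∑ j ∈ range (l + 1),
          (-1 : ℝ) ^ (j+1) * (l.choose (j+1)) / ((k + (j+1) + 1 : ℕ) : ℝ))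
        + (-1 : ℝ) ^ 0 * (((l+1).choose 0 : ℕ) : ℝ) / ((k + 0 + 1 : ℕ) : ℝ)
        = 1 / (((k + l + 1) * (k + l).choose k : ℕ) : ℝ) := by
      have := Finset.sum_range_succ'
        (fun j => (-1 : ℝ) ^ j * (l.choose j) / ((k + j + 1 : ℕ) : ℝ)) (l + 1)
      simp only [Nat.choose_zero_right] at this ⊢
      rw [← this, Finset.sum_range_succ, Nat.choose_succ_self, ih k]
      simp
    rw [add_assoc, e2]
    have hA : 0 < ((k + l).choose k : ℝ) := by
      exact_mod_cast Nat.choose_pos (by omega : k ≤ k + l)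
    have hB1 : 0 < ((k + l + 1).choose (k + 1) : ℝ) := by
      exact_mod_cast Nat.choose_pos (by omega : k + 1 ≤ k + l + 1)
    have hB2 : 0 < ((k + l + 1).choose k : ℝ) := by
      exact_mod_cast Nat.choose_pos (by omega : k ≤ k + l + 1)
    have c1 : ((k + l + 1).choose (k + 1) : ℝ) * (k + 1) = (k + l + 1) * ((k + l).choose k) := by
      exact_mod_cast congrArg (Nat.cast (R := ℝ)) (Nat.add_one_mul_choose_eq (k + l) k).symm
    have c2 : ((k + l + 1).choose k : ℝ) * (l + 1) = (k + l + 1) * ((k + l).choose k) := by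
      have h4 : (k + l + 1).choose k = (k + l + 1).choose (l + 1) := by
        rw [← Nat.choose_symm (by omega : k ≤ k + l + 1)]
        congr 1
        omega
      have h5 : (k + l).choose k = (k + l).choose l := by
        rw [← Nat.choose_symm (by omega : k ≤ k + l)]
        congr 1
        omega
      rw [h4, h5]
      exact_mod_cast congrArg (Nat.cast (R := ℝ)) (Nat.add_one_mul_choose_eq (k + l) l).symm
    rw [show k + 1 + l = k + l + 1 from by omega, show k + (l + 1) = k + l + 1 from by omega]
    push_cast
    have h6 : ((k:ℝ) + l + 1) ≠ 0 := by positivity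
    have h7 : ((k:ℝ) + l + 1 + 1) ≠ 0 := by positivity
    field_simp
    linear_combination (((k + l + 1).choose k : ℕ) : ℝ) * c1
      + (((k + l + 1).choose (k + 1) : ℕ) : ℝ) * c2

noncomputable def FF (k l : ℕ) (x : ℝ) (y : ℝ) : ℝ :=
  (-1) ^ (l + 1) * ∑ j ∈ Finset.range (k + 1),
      x ^ (k - j) * (k.choose j : ℝ) * bernoulliPoly (l + j + 1) y / (l + j + 1) +
    (-1) ^ (k + 1) * ∑ j ∈ Finset.range (l + 1),
      x ^ (l - j) * (l.choose j : ℝ) * bernoulliPoly (k + j + 1) (1 - x - y) / (k + j + 1)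

lemma sum_pow_helper (n m : ℕ) (u v : ℝ) :
    ∑ j ∈ range (n + 1), v ^ (n - j) * (n.choose j : ℝ) * u ^ (m + j) = u ^ m * (u + v) ^ n := by
  rw [add_pow, Finset.mul_sum]
  refine Finset.sum_congr rfl fun j hj => ?_
  rw [pow_add]
  ring

lemma FF_periodic (k l : ℕ) (x y : ℝ) : FF k l x (y + 1) = FF k l x y := by
  have h1 : ∀ j ∈ range (k + 1),
      x ^ (k - j) * (k.choose j : ℝ) * bernoulliPoly (l + j + 1) (y + 1) / (l + j + 1)
      = x ^ (k - j) * (k.choose j : ℝ) * bernoulliPoly (l + j + 1) y / (l + j + 1)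
        + x ^ (k - j) * (k.choose j : ℝ) * y ^ (l + j) := by
    intro j _
    have hb := bp_one_add (l + j + 1) y
    rw [show l + j + 1 - 1 = l + j from by omega] at hb
    rw [show y + 1 = 1 + y from by ring, hb]
    have hne : ((l : ℝ) + j + 1) ≠ 0 := by positivity
    push_cast
    field_simp
  have h2 : ∀ j ∈ range (l + 1),
      x ^ (l - j) * (l.choose j : ℝ) * bernoulliPoly (k + j + 1) (1 - x - (y + 1)) / (k + j + 1)
      = x ^ (l - j) * (l.choose j : ℝ) * bernoulliPoly (k + j + 1) (1 - x - y) / (k + j + 1)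
        - x ^ (l - j) * (l.choose j : ℝ) * (-x - y) ^ (k + j) := by
    intro j _
    have hb := bp_one_add (k + j + 1) (1 - x - y - 1)
    rw [show (1 : ℝ) + (1 - x - y - 1) = 1 - x - y from by ring,
      show k + j + 1 - 1 = k + j from by omega] at hb
    have hb2 : bernoulliPoly (k + j + 1) (1 - x - y - 1)
        = bernoulliPoly (k + j + 1) (1 - x - y) - (k + j + 1 : ℕ) * (-x - y) ^ (k + j) := by
      rw [show (-x - y : ℝ) = 1 - x - y - 1 from by ring]
      linarith [hb]
    rw [show 1 - x - (y + 1) = 1 - x - y - 1 from by ring, hb2]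
    have hne : ((k : ℝ) + j + 1) ≠ 0 := by positivity
    push_cast
    field_simp
  unfold FF
  rw [Finset.sum_congr rfl h1, Finset.sum_congr rfl h2, Finset.sum_add_distrib,
    Finset.sum_sub_distrib, sum_pow_helper k l y x, sum_pow_helper l k (-x - y) x]
  have hkk : (-1 : ℝ) ^ k * (-1) ^ k = 1 := by
    rw [← pow_add, show k + k = 2 * k from by omega, pow_mul]
    norm_num
  have key : (-1 : ℝ) ^ (l + 1) * (y ^ l * (y + x) ^ k)
      = (-1) ^ (k + 1) * ((-x - y) ^ k * (-x - y + x) ^ l) := by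
    rw [show (-x - y + x : ℝ) = (-1) * y from by ring, mul_pow,
      show (-x - y : ℝ) = (-1) * (x + y) from by ring, mul_pow]
    linear_combination ((-1 : ℝ) ^ l * y ^ l * (x + y) ^ k) * hkk
  linear_combination key

lemma FF_poly (k l : ℕ) (x : ℝ) : ∃ P : Polynomial ℝ, ∀ y, FF k l x y = P.eval y := by
  refine ⟨(∑ j ∈ range (k + 1),
      Polynomial.C ((-1) ^ (l+1) * x ^ (k - j) * (k.choose j : ℝ) / ((l:ℝ) + j + 1)) *
        ((Polynomial.bernoulli (l + j + 1)).map (algebraMap ℚ ℝ)))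
    + ∑ j ∈ range (l + 1),
      Polynomial.C ((-1) ^ (k+1) * x ^ (l - j) * (l.choose j : ℝ) / ((k:ℝ) + j + 1)) *
        (((Polynomial.bernoulli (k + j + 1)).map (algebraMap ℚ ℝ)).comp
          (Polynomial.C (1 - x) - Polynomial.X)), ?_⟩
  intro y
  rw [Polynomial.eval_add, Polynomial.eval_finset_sum, Polynomial.eval_finset_sum]
  unfold FF
  rw [Finset.mul_sum, Finset.mul_sum]
  congr 1
  · refine Finset.sum_congr rfl fun j hj => ?_
    rw [Polynomial.eval_mul, Polynomial.eval_C]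
    unfold bernoulliPoly
    ring
  · refine Finset.sum_congr rfl fun j hj => ?_
    rw [Polynomial.eval_mul, Polynomial.eval_C, Polynomial.eval_comp]
    simp only [Polynomial.eval_sub, Polynomial.eval_C, Polynomial.eval_X]
    unfold bernoulliPoly
    ring

lemma FF_int (k l : ℕ) (x : ℝ) :
    ∫ t in (0:ℝ)..1, FF k l x t
      = x ^ (k + l + 1) / ((k + l + 1) * ((k + l).choose k : ℝ)) := by
  have cont1 : ∀ j : ℕ, Continuous (fun t : ℝ =>
      x ^ (k - j) * (k.choose j : ℝ) * bernoulliPoly (l + j + 1) t / ((l:ℝ) + j + 1)) := by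
    intro j
    exact ((continuous_const.mul (bp_continuous (l + j + 1))).div_const _)
  have cont2 : ∀ j : ℕ, Continuous (fun t : ℝ =>
      x ^ (l - j) * (l.choose j : ℝ) * bernoulliPoly (k + j + 1) (1 - x - t) / ((k:ℝ) + j + 1)) := by
    intro j
    exact ((continuous_const.mul ((bp_continuous (k + j + 1)).comp
      (by continuity))).div_const _)
  have int1 : ∀ j ∈ range (k + 1), IntervalIntegrable (fun t : ℝ =>
      x ^ (k - j) * (k.choose j : ℝ) * bernoulliPoly (l + j + 1) t / ((l:ℝ) + j + 1))
      MeasureTheory.volume 0 1 := fun j _ => (cont1 j).intervalIntegrable 0 1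
  have int2 : ∀ j ∈ range (l + 1), IntervalIntegrable (fun t : ℝ =>
      x ^ (l - j) * (l.choose j : ℝ) * bernoulliPoly (k + j + 1) (1 - x - t) / ((k:ℝ) + j + 1))
      MeasureTheory.volume 0 1 := fun j _ => (cont2 j).intervalIntegrable 0 1
  have intS1 : IntervalIntegrable (fun t : ℝ => ∑ j ∈ range (k + 1),
      x ^ (k - j) * (k.choose j : ℝ) * bernoulliPoly (l + j + 1) t / ((l:ℝ) + j + 1))
      MeasureTheory.volume 0 1 :=
    (continuous_finset_sum _ fun j _ => cont1 j).intervalIntegrable 0 1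
  have intS2 : IntervalIntegrable (fun t : ℝ => ∑ j ∈ range (l + 1),
      x ^ (l - j) * (l.choose j : ℝ) * bernoulliPoly (k + j + 1) (1 - x - t) / ((k:ℝ) + j + 1))
      MeasureTheory.volume 0 1 :=
    (continuous_finset_sum _ fun j _ => cont2 j).intervalIntegrable 0 1
  unfold FF
  rw [intervalIntegral.integral_add (intS1.const_mul _) (intS2.const_mul _),
    intervalIntegral.integral_const_mul, intervalIntegral.integral_const_mul,
    intervalIntegral.integral_finset_sum int1, intervalIntegral.integral_finset_sum int2]
  have t1 : ∀ j ∈ range (k + 1), (∫ t in (0:ℝ)..1,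
      x ^ (k - j) * (k.choose j : ℝ) * bernoulliPoly (l + j + 1) t / ((l:ℝ) + j + 1)) = 0 := by
    intro j _
    rw [intervalIntegral.integral_div, intervalIntegral.integral_const_mul,
      integral_bp (l + j + 1) (by omega)]
    simp
  have t2 : ∀ j ∈ range (l + 1), (∫ t in (0:ℝ)..1,
      x ^ (l - j) * (l.choose j : ℝ) * bernoulliPoly (k + j + 1) (1 - x - t) / ((k:ℝ) + j + 1))
      = x ^ (l - j) * (l.choose j : ℝ) * (-x) ^ (k + j + 1) / ((k:ℝ) + j + 1) := by
    intro j _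
    rw [intervalIntegral.integral_div, intervalIntegral.integral_const_mul,
      integral_bp_shift (k + j + 1) (1 - x), show (1 - x - 1 : ℝ) = -x from by ring]
  rw [Finset.sum_congr rfl t1, Finset.sum_congr rfl t2, Finset.sum_const_zero, mul_zero, zero_add]
  have t3 : ∀ j ∈ range (l + 1),
      (-1 : ℝ) ^ (k + 1) * (x ^ (l - j) * (l.choose j : ℝ) * (-x) ^ (k + j + 1) / ((k:ℝ) + j + 1))
      = x ^ (k + l + 1) * ((-1 : ℝ) ^ j * (l.choose j) / ((k + j + 1 : ℕ) : ℝ)) := by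
    intro j hj
    have hx : x ^ (l - j) * x ^ (k + j + 1) = x ^ (k + l + 1) := by
      rw [← pow_add]
      congr 1
      have := Finset.mem_range.mp hj
      omega
    have hsign : (-1 : ℝ) ^ (k + 1) * (-1) ^ (k + j + 1) = (-1) ^ j := by
      rw [← pow_add, show k + 1 + (k + j + 1) = 2 * (k + 1) + j from by omega, pow_add, pow_mul]
      norm_num
    have e : (-1 : ℝ) ^ (k + 1) * (-x) ^ (k + j + 1) = (-1) ^ j * x ^ (k + j + 1) := by
      rw [show (-x : ℝ) = (-1) * x from by ring, mul_pow, ← mul_assoc, hsign]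
    push_cast
    rw [← hx]
    linear_combination (x ^ (l - j) * (l.choose j : ℝ) / ((k : ℝ) + j + 1)) * e
  rw [Finset.mul_sum, Finset.sum_congr rfl t3, ← Finset.mul_sum, beta_sum l k]
  push_cast
  ring

theorem stmt18 (k l : ℕ) (x y z : ℝ) (h : x + y + z = 1) :
    (-1) ^ (l + 1) * ∑ j ∈ Finset.range (k + 1),
        x ^ (k - j) * (k.choose j : ℝ) * bernoulliPoly (l + j + 1) y / (l + j + 1) +
      (-1) ^ (k + 1) * ∑ j ∈ Finset.range (l + 1),
        x ^ (l - j) * (l.choose j : ℝ) * bernoulliPoly (k + j + 1) z / (k + j + 1) =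
    x ^ (k + l + 1) / ((k + l + 1) * ((k + l).choose k : ℝ)) := by
  have hz : z = 1 - x - y := by linarith
  subst hz
  change FF k l x y = _
  obtain ⟨P, hP⟩ := FF_poly k l x
  have hper : ∀ t : ℝ, P.eval (t + 1) = P.eval t := fun t => by
    rw [← hP, ← hP, FF_periodic]
  have hconst : ∀ t : ℝ, FF k l x t = FF k l x 0 := fun t => by
    rw [hP, hP, periodic_poly_const P hper t]
  calc FF k l x y = FF k l x 0 := hconst y
    _ = ∫ t in (0:ℝ)..1, FF k l x t := by
        rw [intervalIntegral.integral_congr (g := fun _ => FF k l x 0) (fun t _ => hconst t)]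
        simp
    _ = x ^ (k + l + 1) / ((k + l + 1) * ((k + l).choose k : ℝ)) := FF_int k l x
end

section
/- Let k, ℓ be nonnegative integers and x, y, z real numbers with x + y + z = 1. Then (-1)^ℓ Σ_{j=0}^k x^{k-j} C(k,j) B_{ℓ+j}(y) = (-1)^k Σ_{j=0}^ℓ x^{ℓ-j} C(ℓ,j) B_{k+j}(z). -/
open Finset

lemma bp_def (n : ℕ) (u : ℝ) :
    bernoulliPoly n u =
      ∑ i ∈ range (n + 1), ((bernoulli i : ℝ)) * (n.choose i : ℝ) * u ^ (n - i) := by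
  unfold bernoulliPoly
  rw [Polynomial.bernoulli, Polynomial.map_sum, Polynomial.eval_finset_sum]
  refine Finset.sum_congr rfl fun i _ => ?_
  simp [Polynomial.map_monomial, mul_comm]

lemma sum_range_shift {M : Type*} [AddCommMonoid M] (f : ℕ → M) (i n : ℕ) (hi : i ≤ n)
    (h0 : ∀ j < i, f j = 0) :
    ∑ j ∈ range (n + 1), f j = ∑ m ∈ range (n + 1 - i), f (i + m) := by
  have h3 : Finset.Ico i (n + 1) ⊆ range (n + 1) := by
    rw [range_eq_Ico]; exact Finset.Ico_subset_Ico (Nat.zero_le _) le_rfl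
  rw [← Finset.sum_subset h3 (fun j hj hnj => h0 j (by
    have hj' := Finset.mem_range.1 hj
    simp only [Finset.mem_Ico, not_and, not_lt] at hnj
    omega)), Finset.sum_Ico_eq_sum_range]

lemma bp_add (n : ℕ) (s t : ℝ) :
    ∑ j ∈ range (n + 1), (n.choose j : ℝ) * t ^ (n - j) * bernoulliPoly j s
      = bernoulliPoly n (s + t) := by
  have step1 : ∀ j ∈ range (n + 1),
      (n.choose j : ℝ) * t ^ (n - j) * bernoulliPoly j s
        = ∑ i ∈ range (n + 1),
            (n.choose j : ℝ) * t ^ (n - j) * ((bernoulli i : ℝ) * (j.choose i : ℝ) * s ^ (j - i)) := by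
    intro j hj
    rw [bp_def, Finset.mul_sum]
    refine Finset.sum_subset (Finset.range_subset_range.2 (by have := Finset.mem_range.1 hj; omega)) ?_
    intro i _ hi
    have : j.choose i = 0 := Nat.choose_eq_zero_of_lt (by simpa using hi)
    simp [this]
  rw [Finset.sum_congr rfl step1, Finset.sum_comm, bp_def]
  refine Finset.sum_congr rfl fun i hi => ?_
  have hin : i ≤ n := Nat.lt_succ_iff.1 (Finset.mem_range.1 hi)
  rw [sum_range_shift _ i n hin (fun j hj => by
    have : j.choose i = 0 := Nat.choose_eq_zero_of_lt hj
    simp [this])]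
  have : ∀ m ∈ range (n + 1 - i),
      (n.choose (i + m) : ℝ) * t ^ (n - (i + m)) *
          ((bernoulli i : ℝ) * ((i + m).choose i : ℝ) * s ^ (i + m - i))
        = (bernoulli i : ℝ) * (n.choose i : ℝ) * ((n - i).choose m : ℝ) * (s ^ m * t ^ (n - i - m)) := by
    intro m hm
    have hm' : m ≤ n - i := by
      have := Finset.mem_range.1 hm; omega
    have hc : n.choose (i + m) * (i + m).choose i = n.choose i * (n - i).choose m := by
      have := Nat.choose_mul (n := n) (k := i + m) (s := i) (Nat.le_add_right _ _)
      simpa using this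
    have hexp : i + m - i = m := by omega
    have hexp2 : n - (i + m) = n - i - m := by omega
    have hcc : (n.choose (i + m) : ℝ) * ((i + m).choose i : ℝ)
        = (n.choose i : ℝ) * ((n - i).choose m : ℝ) := by exact_mod_cast congrArg (Nat.cast (R := ℝ)) hc
    rw [hexp, hexp2]
    linear_combination (t ^ (n - i - m) * (bernoulli i : ℝ) * s ^ m) * hcc
  rw [Finset.sum_congr rfl this, add_pow, Finset.mul_sum]
  have hr : n + 1 - i = (n - i) + 1 := by omega
  rw [hr]
  refine Finset.sum_congr rfl fun m _ => by push_cast; ring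

lemma sum_bern_choose (N : ℕ) :
    ∑ i ∈ range (N + 1), (bernoulli i : ℝ) * (N.choose i : ℝ)
      = (-1) ^ N * (bernoulli N : ℝ) := by
  have h1 : bernoulliPoly N 1 = ((Polynomial.bernoulli N).eval 1 : ℚ) := by
    unfold bernoulliPoly
    rw [Polynomial.eval_one_map]
    simp
  rw [bp_def] at h1
  simp only [one_pow, mul_one] at h1
  rw [h1, Polynomial.bernoulli_eval_one, bernoulli'_eq_bernoulli]
  push_cast
  ring

lemma bp_reflect (n : ℕ) (u : ℝ) :
    bernoulliPoly n (1 - u) = (-1) ^ n * bernoulliPoly n u := by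
  rw [bp_def, bp_def]
  have expand : ∀ i ∈ range (n + 1),
      (bernoulli i : ℝ) * (n.choose i : ℝ) * (1 - u) ^ (n - i)
        = ∑ m ∈ range (n + 1),
            (bernoulli i : ℝ) * (n.choose i : ℝ) * ((-u) ^ m * ((n - i).choose m : ℝ)) := by
    intro i hi
    have hin : i ≤ n := Nat.lt_succ_iff.1 (Finset.mem_range.1 hi)
    have hpow : (1 - u) ^ (n - i) = ∑ m ∈ range (n - i + 1), (-u) ^ m * ((n - i).choose m : ℝ) := by
      rw [show (1 - u : ℝ) = -u + 1 by ring, add_pow]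
      simp
    rw [hpow, Finset.mul_sum]
    refine Finset.sum_subset (Finset.range_subset_range.2 (by omega)) fun m _ hm => ?_
    have : (n - i).choose m = 0 :=
      Nat.choose_eq_zero_of_lt (by have := Finset.mem_range.not.1 hm; omega)
    simp [this]
  rw [Finset.sum_congr rfl expand, Finset.sum_comm, Finset.mul_sum]
  rw [← Finset.sum_range_reflect (fun j => (-1 : ℝ) ^ n * ((bernoulli j : ℝ) * (n.choose j : ℝ)
    * u ^ (n - j))) (n + 1)]
  · refine Finset.sum_congr rfl fun m hm => ?_
    have hmn : m ≤ n := Nat.lt_succ_iff.1 (Finset.mem_range.1 hm)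
    have hidx : n + 1 - 1 - m = n - m := by omega
    rw [hidx]
    -- inner sum over i
    have shrink : ∑ i ∈ range (n + 1),
        (bernoulli i : ℝ) * (n.choose i : ℝ) * ((-u) ^ m * ((n - i).choose m : ℝ))
          = ∑ i ∈ range (n - m + 1),
            (bernoulli i : ℝ) * (n.choose i : ℝ) * ((-u) ^ m * ((n - i).choose m : ℝ)) := by
      refine (Finset.sum_subset (Finset.range_subset_range.2 (by omega)) fun i hi hni => ?_).symm
      have : (n - i).choose m = 0 := Nat.choose_eq_zero_of_lt (by
        have h1 := Finset.mem_range.1 hi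
        have h2 := Finset.mem_range.not.1 hni
        omega)
      simp [this]
    rw [shrink]
    have hterm : ∀ i ∈ range (n - m + 1),
        (bernoulli i : ℝ) * (n.choose i : ℝ) * ((-u) ^ m * ((n - i).choose m : ℝ))
          = ((n.choose m : ℝ) * (-u) ^ m) * ((bernoulli i : ℝ) * ((n - m).choose i : ℝ)) := by
      intro i hi
      have hi' : i ≤ n - m := Nat.lt_succ_iff.1 (Finset.mem_range.1 hi)
      have hc : n.choose (n - m) * (n - m).choose i = n.choose i * (n - i).choose m := by
        have h1 := Nat.choose_mul (n := n) (k := n - m) (s := i) hi'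
        have h2 : (n - i).choose (n - m - i) = (n - i).choose m := by
          rw [← Nat.choose_symm (by omega : n - m - i ≤ n - i)]
          congr 1
          omega
        rw [h1, h2]
      have hc2 : n.choose (n - m) = n.choose m := Nat.choose_symm hmn
      have hcc : (n.choose m : ℝ) * ((n - m).choose i : ℝ)
          = (n.choose i : ℝ) * ((n - i).choose m : ℝ) := by
        rw [hc2] at hc
        exact_mod_cast congrArg (Nat.cast (R := ℝ)) hc
      linear_combination (-(bernoulli i : ℝ) * (-u) ^ m) * hcc
    rw [Finset.sum_congr rfl hterm, ← Finset.mul_sum, sum_bern_choose]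
    have hsgn : (-u) ^ m = (-1 : ℝ) ^ m * u ^ m := by rw [neg_pow]
    have hsgn2 : (-1 : ℝ) ^ m * (-1 : ℝ) ^ (n - m) = (-1) ^ n := by
      rw [← pow_add]
      congr 1
      omega
    have hidx2 : n - (n - m) = m := by omega
    rw [Nat.choose_symm hmn, hidx2, hsgn]
    linear_combination ((n.choose m : ℝ) * u ^ m * (bernoulli (n - m) : ℝ)) * hsgn2

lemma key (k : ℕ) : ∀ (l i : ℕ),
    ∑ j ∈ range (k + 1), (-1 : ℝ) ^ j * (k.choose j : ℝ) * ((l + j).choose i : ℝ)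
      = if k ≤ i then (-1 : ℝ) ^ k * (l.choose (i - k) : ℝ) else 0 := by
  induction k with
  | zero => intro l i; simp
  | succ k ih =>
    intro l i
    have hsum : ∑ j ∈ range (k + 1 + 1),
          (-1 : ℝ) ^ j * ((k + 1).choose j : ℝ) * ((l + j).choose i : ℝ)
        = (∑ j ∈ range (k + 1), (-1 : ℝ) ^ j * (k.choose j : ℝ) * ((l + j).choose i : ℝ))
          - ∑ j ∈ range (k + 1), (-1 : ℝ) ^ j * (k.choose j : ℝ) * (((l + 1) + j).choose i : ℝ) := by
      rw [Finset.sum_range_succ'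
        (fun j => (-1 : ℝ) ^ j * ((k + 1).choose j : ℝ) * ((l + j).choose i : ℝ)) (k + 1)]
      have hF : ∀ j ∈ range (k + 1),
          (-1 : ℝ) ^ (j + 1) * ((k + 1).choose (j + 1) : ℝ) * ((l + (j + 1)).choose i : ℝ)
            = (-1 : ℝ) ^ (j + 1) * (k.choose (j + 1) : ℝ) * ((l + (j + 1)).choose i : ℝ)
              - (-1 : ℝ) ^ j * (k.choose j : ℝ) * (((l + 1) + j).choose i : ℝ) := by
        intro j _
        rw [Nat.choose_succ_succ k j, show (l + 1) + j = l + (j + 1) by omega]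
        push_cast
        ring
      rw [Finset.sum_congr rfl hF, Finset.sum_sub_distrib]
      have hshift : ∑ j ∈ range (k + 1),
            (-1 : ℝ) ^ (j + 1) * (k.choose (j + 1) : ℝ) * ((l + (j + 1)).choose i : ℝ)
          = (∑ j ∈ range (k + 1), (-1 : ℝ) ^ j * (k.choose j : ℝ) * ((l + j).choose i : ℝ))
            - (-1 : ℝ) ^ 0 * (k.choose 0 : ℝ) * ((l + 0).choose i : ℝ) := by
        have h2 := Finset.sum_range_succ'
          (fun j => (-1 : ℝ) ^ j * (k.choose j : ℝ) * ((l + j).choose i : ℝ)) (k + 1)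
        have h3 := Finset.sum_range_succ
          (fun j => (-1 : ℝ) ^ j * (k.choose j : ℝ) * ((l + j).choose i : ℝ)) (k + 1)
        have h4 : (k.choose (k + 1) : ℝ) = 0 := by
          rw [Nat.choose_eq_zero_of_lt (by omega)]; simp
        simp only [h4, mul_zero, zero_mul, add_zero] at h3
        rw [← h3, h2]
        ring
      rw [hshift]
      simp
      ring
    rw [hsum, ih l i, ih (l + 1) i]
    by_cases h1 : k + 1 ≤ i
    · have hk : k ≤ i := by omega
      rw [if_pos hk, if_pos hk, if_pos h1]
      have hik : i - k = (i - (k + 1)) + 1 := by omega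
      rw [hik, Nat.choose_succ_succ l (i - (k + 1))]
      push_cast
      ring
    · by_cases h2 : k ≤ i
      · have hik : i = k := by omega
        subst hik
        rw [if_pos h2, if_pos h2, if_neg h1]
        simp
      · rw [if_neg h2, if_neg h2, if_neg h1]
        simp

theorem stmt19 (k l : ℕ) (x y z : ℝ) (h : x + y + z = 1) :
    (-1) ^ l * ∑ j ∈ Finset.range (k + 1),
        x ^ (k - j) * (k.choose j : ℝ) * bernoulliPoly (l + j) y =
      (-1) ^ k * ∑ j ∈ Finset.range (l + 1),
        x ^ (l - j) * (l.choose j : ℝ) * bernoulliPoly (k + j) z := by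
  have hrefl : ∀ i : ℕ, bernoulliPoly i (x + y) = (-1 : ℝ) ^ i * bernoulliPoly i z := by
    intro i
    rw [show x + y = 1 - z by linarith, bp_reflect]
  have claim1 : ∑ j ∈ Finset.range (k + 1),
        x ^ (k - j) * (k.choose j : ℝ) * bernoulliPoly (l + j) y
      = (-1 : ℝ) ^ l * ∑ i ∈ range (k + l + 1),
          x ^ (k + l - i) * (if k ≤ i then (-1 : ℝ) ^ k * (l.choose (i - k) : ℝ) else 0)
            * bernoulliPoly i z := by
    have stepA : ∀ j ∈ range (k + 1),
        x ^ (k - j) * (k.choose j : ℝ) * bernoulliPoly (l + j) y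
          = ∑ i ∈ range (k + l + 1),
              ((-1 : ℝ) ^ (l + j + i) * x ^ (k + l - i))
                * ((k.choose j : ℝ) * ((l + j).choose i : ℝ))
                * ((-1 : ℝ) ^ i * bernoulliPoly i z) := by
      intro j hj
      have hjk : j ≤ k := Nat.lt_succ_iff.1 (Finset.mem_range.1 hj)
      have h0 : bernoulliPoly (l + j) y
          = ∑ i ∈ range (l + j + 1),
              ((l + j).choose i : ℝ) * (-x) ^ (l + j - i) * bernoulliPoly i (x + y) := by
        rw [congrArg (bernoulliPoly (l + j)) (show y = (x + y) + (-x) by ring),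
          ← bp_add (l + j) (x + y) (-x)]
      rw [h0, Finset.mul_sum]
      symm
      rw [← Finset.sum_subset (Finset.range_subset_range.2 (show l + j + 1 ≤ k + l + 1 by omega))
        (fun i _ hni => by
          have : (l + j).choose i = 0 := Nat.choose_eq_zero_of_lt (by
            have := Finset.mem_range.not.1 hni; omega)
          simp [this])]
      refine Finset.sum_congr rfl fun i hi => ?_
      have hil : i ≤ l + j := Nat.lt_succ_iff.1 (Finset.mem_range.1 hi)
      rw [hrefl i, show (-x) ^ (l + j - i) = (-1 : ℝ) ^ (l + j - i) * x ^ (l + j - i) from by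
        rw [neg_pow]]
      have e1 : (-1 : ℝ) ^ (l + j - i) = (-1 : ℝ) ^ (l + j + i) := by
        rw [show l + j + i = (l + j - i) + 2 * i by omega, pow_add, pow_mul]
        norm_num
      rw [e1]
      have e2 : x ^ (k - j) * x ^ (l + j - i) = x ^ (k + l - i) := by
        rw [← pow_add]; congr 1; omega
      calc ((-1 : ℝ) ^ (l + j + i) * x ^ (k + l - i))
              * ((k.choose j : ℝ) * ((l + j).choose i : ℝ))
              * ((-1 : ℝ) ^ i * bernoulliPoly i z)
          = ((-1 : ℝ) ^ (l + j + i) * (x ^ (k - j) * x ^ (l + j - i)))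
              * ((k.choose j : ℝ) * ((l + j).choose i : ℝ))
              * ((-1 : ℝ) ^ i * bernoulliPoly i z) := by rw [e2]
        _ = x ^ (k - j) * (k.choose j : ℝ)
              * (((l + j).choose i : ℝ) * ((-1 : ℝ) ^ (l + j + i) * x ^ (l + j - i))
                * ((-1 : ℝ) ^ i * bernoulliPoly i z)) := by ring
    rw [Finset.sum_congr rfl stepA, Finset.sum_comm, Finset.mul_sum]
    refine Finset.sum_congr rfl fun i hi => ?_
    have hterm : ∀ j ∈ range (k + 1),
        ((-1 : ℝ) ^ (l + j + i) * x ^ (k + l - i))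
            * ((k.choose j : ℝ) * ((l + j).choose i : ℝ))
            * ((-1 : ℝ) ^ i * bernoulliPoly i z)
          = (((-1 : ℝ) ^ l * (-1) ^ i * x ^ (k + l - i)) * ((-1 : ℝ) ^ i * bernoulliPoly i z))
            * ((-1 : ℝ) ^ j * (k.choose j : ℝ) * ((l + j).choose i : ℝ)) := by
      intro j _
      rw [pow_add, pow_add]
      ring
    rw [Finset.sum_congr rfl hterm, ← Finset.mul_sum, key k l i]
    have hii : (-1 : ℝ) ^ i * (-1) ^ i = 1 := by
      rw [← pow_add, ← two_mul, pow_mul]; norm_num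
    linear_combination ((-1 : ℝ) ^ l * x ^ (k + l - i) * bernoulliPoly i z
      * (if k ≤ i then (-1 : ℝ) ^ k * (l.choose (i - k) : ℝ) else 0)) * hii
  have claim2 : ∑ i ∈ range (k + l + 1),
        x ^ (k + l - i) * (if k ≤ i then (-1 : ℝ) ^ k * (l.choose (i - k) : ℝ) else 0)
          * bernoulliPoly i z
      = (-1 : ℝ) ^ k * ∑ j ∈ Finset.range (l + 1),
          x ^ (l - j) * (l.choose j : ℝ) * bernoulliPoly (k + j) z := by
    rw [sum_range_shift _ k (k + l) (by omega) (fun i hik => by rw [if_neg (by omega)]; ring),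
      show k + l + 1 - k = l + 1 by omega, Finset.mul_sum]
    refine Finset.sum_congr rfl fun m hm => ?_
    rw [if_pos (by omega : k ≤ k + m), show k + m - k = m by omega,
      show k + l - (k + m) = l - m by omega]
    ring
  rw [claim1, claim2, ← mul_assoc,
    show (-1 : ℝ) ^ l * (-1) ^ l = 1 by rw [← pow_add, ← two_mul, pow_mul]; norm_num,
    one_mul]
end
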